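/- Let n, k ≥ 2, let i ∈ {1, …, n}, and let fᵢ(x₁,…,xₙ) = (x₁, …, xᵢ^k, …, xₙ) (the k-th power in the i-th coordinate). If l : (ℂⁿ,0) → (ℂⁿ,0) is a holomorphic germ with l(0) = 0 such that the composition g = l ∘ fᵢ is a k-fold, then dl(0) is invertible, i.e. l is a germ of biholomorphism. -/

import Mathlib

noncomputable section

open Filter Function

/-- ℂⁿ as the space of functions `Fin n → ℂ`. -/
abbrev Cn (n : ℕ) : Type := Fin n → ℂ

/-- Equality of germs at 0 of maps (ℂⁿ,0) → (ℂⁿ,0). -/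
def GermEq {n : ℕ} (f g : Cn n → Cn n) : Prop := f =ᶠ[nhds 0] g

/-- Germ at 0 of a holomorphic map (ℂⁿ,0) → (ℂⁿ,0): holomorphic on a
neighborhood of 0 and sending 0 to 0. -/
def IsHoloGerm {n : ℕ} (f : Cn n → Cn n) : Prop :=
  f 0 = 0 ∧ ∀ᶠ x in nhds (0 : Cn n), AnalyticAt ℂ f x

/-- Germ of biholomorphism on (ℂⁿ,0): holomorphic germ with invertible
derivative at 0. -/
def IsBiholGerm {n : ℕ} (h : Cn n → Cn n) : Prop :=
  IsHoloGerm h ∧ IsUnit (fderiv ℂ h 0)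

/-- φ has order exactly r as a germ at 0 (φ^[r] = id as germs, r minimal). -/
def HasOrderGerm {n : ℕ} (φ : Cn n → Cn n) (r : ℕ) : Prop :=
  GermEq (φ^[r]) id ∧ ∀ m : ℕ, 0 < m → m < r → ¬ GermEq (φ^[m]) id

/-- The fixed-point set of φ near 0 is a complex submanifold of codimension 1:
locally the zero set of a holomorphic submersion F : (ℂⁿ,0) → (ℂ,0). -/
def FixIsHypersurface {n : ℕ} (φ : Cn n → Cn n) : Prop :=
  ∃ F : Cn n → ℂ, F 0 = 0 ∧ AnalyticAt ℂ F 0 ∧ fderiv ℂ F 0 ≠ 0 ∧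
    ∀ᶠ x in nhds (0 : Cn n), (φ x = x ↔ F x = 0)

/-- A reflection on (ℂⁿ,0): germ of biholomorphism of finite order ≥ 2 whose
fixed-point set is a codimension-1 complex submanifold. -/
def IsReflection {n : ℕ} (φ : Cn n → Cn n) : Prop :=
  IsBiholGerm φ ∧ (∃ r : ℕ, 2 ≤ r ∧ HasOrderGerm φ r) ∧ FixIsHypersurface φ

/-- A reflection of order exactly k. -/
def IsReflectionOfOrder {n : ℕ} (φ : Cn n → Cn n) (k : ℕ) : Prop :=
  IsBiholGerm φ ∧ HasOrderGerm φ k ∧ FixIsHypersurface φ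

/-- The canonical k-fold f₁(x) = (x₁^k, x₂, …, xₙ). -/
def canonFold (n k : ℕ) : Cn n → Cn n := fun x i => if (i : ℕ) = 0 then x i ^ k else x i

/-- The canonical reflection φ₁(x) = (λ x₁, x₂, …, xₙ) with λ = e^{2πi/k}. -/
def canonRefl (n k : ℕ) : Cn n → Cn n :=
  fun x i => if (i : ℕ) = 0 then Complex.exp (2 * (Real.pi : ℂ) * Complex.I / (k : ℂ)) * x i
    else x i

/-- f is a k-fold: a holomorphic germ 𝒜-equivalent to the canonical k-fold,
i.e. f = l ∘ f₁ ∘ h⁻¹ as germs for germs of biholomorphisms h, l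
(equivalently, f ∘ h = l ∘ f₁ as germs). -/
def IsKFold {n : ℕ} (k : ℕ) (f : Cn n → Cn n) : Prop :=
  IsHoloGerm f ∧ ∃ h l : Cn n → Cn n, IsBiholGerm h ∧ IsBiholGerm l ∧
    GermEq (f ∘ h) (l ∘ canonFold n k)

/-- The canonical k-fold in the i-th coordinate: fᵢ(x) = (x₁, …, xᵢ^k, …, xₙ). -/
def foldAt (n k : ℕ) (i : Fin n) : Cn n → Cn n := fun x j => if j = i then x j ^ k else x j

def foldDeriv (n k : ℕ) (i : Fin n) (y : Cn n) : Cn n →L[ℂ] Cn n :=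
  ContinuousLinearMap.pi fun j =>
    if j = i then ((k : ℂ) * y i ^ (k - 1)) • ContinuousLinearMap.proj i
    else ContinuousLinearMap.proj j

lemma hasFDerivAt_foldAt (n k : ℕ) (i : Fin n) (y : Cn n) :
    HasFDerivAt (foldAt n k i) (foldDeriv n k i y) y := by
  rw [foldDeriv]
  apply hasFDerivAt_pi.2
  intro j
  by_cases hj : j = i
  · subst hj
    simp only [if_pos rfl, foldAt, ↓reduceIte]
    have h1 : HasFDerivAt (fun x : Cn n => x j) (ContinuousLinearMap.proj j : Cn n →L[ℂ] ℂ) y :=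
      hasFDerivAt_apply j y
    have h2 : HasDerivAt (fun z : ℂ => z ^ k) ((k : ℂ) * (y j) ^ (k - 1)) (y j) :=
      hasDerivAt_pow k (y j)
    have h3 := h2.comp_hasFDerivAt y h1
    exact h3
  · simp only [if_neg hj, foldAt]
    exact hasFDerivAt_apply (𝕜 := ℂ) j y

lemma det_foldDeriv (n k : ℕ) (i : Fin n) (y : Cn n) :
    LinearMap.det ((foldDeriv n k i y) : Cn n →ₗ[ℂ] Cn n) = (k : ℂ) * y i ^ (k - 1) := by
  classical
  have hM : LinearMap.toMatrix (Pi.basisFun ℂ (Fin n)) (Pi.basisFun ℂ (Fin n))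
      ((foldDeriv n k i y) : Cn n →ₗ[ℂ] Cn n)
      = Matrix.diagonal (fun j => if j = i then (k : ℂ) * y i ^ (k - 1) else 1) := by
    ext a b
    rw [LinearMap.toMatrix_apply]
    simp only [Pi.basisFun_apply, Pi.basisFun_repr, ContinuousLinearMap.coe_coe,
      foldDeriv, ContinuousLinearMap.pi_apply, Matrix.diagonal_apply]
    by_cases ha : a = i
    · subst ha
      simp [Pi.single_apply]
    · simp [ha, Pi.single_apply]
  have := LinearMap.det_toMatrix (Pi.basisFun ℂ (Fin n))
      ((foldDeriv n k i y) : Cn n →ₗ[ℂ] Cn n)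
  rw [hM] at this
  rw [← this, Matrix.det_diagonal, Finset.prod_ite_eq' Finset.univ i
    (fun _ => (k : ℂ) * y i ^ (k - 1))]
  simp

lemma det_ne_zero_of_isUnit {n : ℕ} {L : Cn n →L[ℂ] Cn n} (h : IsUnit L) :
    LinearMap.det (L : Cn n →ₗ[ℂ] Cn n) ≠ 0 := by
  have : IsUnit (L : Cn n →ₗ[ℂ] Cn n) := h.map (ContinuousLinearMap.toLinearMapRingHom)
  exact (LinearMap.isUnit_det _ this).ne_zero

lemma isUnit_of_det_ne_zero {n : ℕ} {L : Cn n →L[ℂ] Cn n}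
    (h : LinearMap.det (L : Cn n →ₗ[ℂ] Cn n) ≠ 0) : IsUnit L := by
  set e : Cn n ≃ₗ[ℂ] Cn n := LinearMap.equivOfDetNeZero (L : Cn n →ₗ[ℂ] Cn n) h with he
  have hcoe : ∀ x, e x = L x := fun x => rfl
  let e' : Cn n ≃L[ℂ] Cn n := e.toContinuousLinearEquiv
  have hcoe' : ∀ x, e' x = L x := fun x => hcoe x
  refine isUnit_iff_exists.2 ⟨e'.symm.toContinuousLinearMap, ?_, ?_⟩
  · ext x
    simp only [ContinuousLinearMap.mul_apply, ContinuousLinearMap.one_apply,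
      ContinuousLinearEquiv.coe_coe]
    rw [← hcoe' (e'.symm x)]
    exact congrFun (e'.apply_symm_apply x) _
  · ext x
    simp only [ContinuousLinearMap.mul_apply, ContinuousLinearMap.one_apply,
      ContinuousLinearEquiv.coe_coe]
    rw [← hcoe' x]
    exact congrFun (e'.symm_apply_apply x) _

lemma contAt_detFderiv {n : ℕ} {f : Cn n → Cn n}
    (hf : ∀ᶠ x in nhds (0 : Cn n), AnalyticAt ℂ f x) :
    ContinuousAt (fun y => LinearMap.det ((fderiv ℂ f y : Cn n →L[ℂ] Cn n) : Cn n →ₗ[ℂ] Cn n)) 0 := by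
  rcases eventually_nhds_iff.1 hf with ⟨U, hU, hUo, h0U⟩
  have hA : AnalyticOnNhd ℂ f U := fun x hx => hU x hx
  have hA' : AnalyticOnNhd ℂ (fderiv ℂ f) U := hA.fderiv
  have hcont : ContinuousAt (fderiv ℂ f) 0 := (hA' 0 h0U).continuousAt
  exact (ContinuousLinearMap.continuous_det.continuousAt).comp hcont

/-- Lemma 3.1: if l is a holomorphic germ such that l ∘ fᵢ is a
k-fold, then l is a germ of biholomorphism. -/
theorem stmt_7 (n k : ℕ) (hn : 2 ≤ n) (hk : 2 ≤ k) (i : Fin n)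
    (l : Cn n → Cn n) (hl : IsHoloGerm l)
    (hg : IsKFold k (l ∘ foldAt n k i)) :
    IsUnit (fderiv ℂ l 0) := by
  classical
  obtain ⟨hl0, hlana⟩ := hl
  obtain ⟨-, h, l', ⟨⟨hh0, hhana⟩, hhu⟩, ⟨⟨hl'0, hl'ana⟩, hl'u⟩, heq⟩ := hg
  have hk0 : k ≠ 0 := by omega
  have hkc : (k : ℂ) ≠ 0 := Nat.cast_ne_zero.2 hk0
  set i0 : Fin n := ⟨0, by omega⟩ with hi0
  -- the curve t ↦ σ t = t e₁
  set σ : ℂ → Cn n := fun t j => if j = i0 then t else 0 with hσ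
  have hσzero : σ 0 = 0 := by funext j; simp [hσ]
  have hσcont : Continuous σ := by
    apply continuous_pi
    intro j
    by_cases hj : j = i0 <;> simp [hσ, hj] <;> fun_prop
  have hσ0 : Tendsto σ (nhds 0) (nhds 0) := by
    simpa [hσzero] using hσcont.tendsto 0
  have hcanon : canonFold n k = foldAt n k i0 := by
    funext x j
    by_cases hj : (j : ℕ) = 0
    · have hji : j = i0 := Fin.ext hj
      simp [canonFold, foldAt, hj, hji, hi0]
    · have hji : j ≠ i0 := fun hc => hj (by rw [hc])
      simp [canonFold, foldAt, hj, hji]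
  have hfoldσ : ∀ t : ℂ, foldAt n k i0 (σ t) = σ (t ^ k) := by
    intro t; funext j
    by_cases hj : j = i0 <;> simp [foldAt, hσ, hj, zero_pow hk0]
  -- continuity facts
  have hhc : Tendsto h (nhds 0) (nhds 0) := by
    have := (hhana.self_of_nhds).continuousAt
    simpa [hh0] using this.tendsto
  have hfoldcont : Continuous (foldAt n k i) := by
    apply continuous_pi
    intro j
    unfold foldAt
    by_cases hj : j = i
    · simp only [if_pos hj]
      exact (continuous_apply j).pow k
    · simp only [if_neg hj]
      exact continuous_apply j
  have hfold00 : foldAt n k i 0 = 0 := by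
    funext j; by_cases hj : j = i <;> simp [foldAt, hj, zero_pow hk0]
  set τ : ℂ → Cn n := fun t => foldAt n k i (h (σ t)) with hτ
  have hτ0 : Tendsto τ (nhds 0) (nhds 0) := by
    have h1 : Tendsto (foldAt n k i) (nhds 0) (nhds 0) := by
      simpa [hfold00] using hfoldcont.tendsto 0
    exact h1.comp (hhc.comp hσ0)
  have hσk0 : Tendsto (fun t : ℂ => σ (t ^ k)) (nhds 0) (nhds 0) := by
    apply hσ0.comp
    have : Continuous (fun t : ℂ => t ^ k) := continuous_pow k
    simpa [zero_pow hk0] using this.tendsto 0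
  -- abbreviations for determinants
  set Dl : Cn n → ℂ := fun y => LinearMap.det ((fderiv ℂ l y : Cn n →L[ℂ] Cn n) : Cn n →ₗ[ℂ] Cn n) with hDl
  set Dh : Cn n → ℂ := fun y => LinearMap.det ((fderiv ℂ h y : Cn n →L[ℂ] Cn n) : Cn n →ₗ[ℂ] Cn n) with hDh
  set Dl' : Cn n → ℂ := fun y => LinearMap.det ((fderiv ℂ l' y : Cn n →L[ℂ] Cn n) : Cn n →ₗ[ℂ] Cn n) with hDl'
  -- suppose det (dl(0)) = 0 and derive a contradiction
  by_cases hd : Dl 0 = 0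
  swap
  · exact isUnit_of_det_ne_zero hd
  exfalso
  -- key eventual identity along the curve
  have heq' : (l ∘ foldAt n k i) ∘ h =ᶠ[nhds 0] l' ∘ foldAt n k i0 := by
    rw [← hcanon]; exact heq
  have ev1 : ∀ᶠ t : ℂ in nhds 0, AnalyticAt ℂ h (σ t) := hσ0.eventually hhana
  have ev2 : ∀ᶠ t : ℂ in nhds 0, AnalyticAt ℂ l (τ t) := hτ0.eventually hlana
  have ev3 : ∀ᶠ t : ℂ in nhds 0, AnalyticAt ℂ l' (σ (t ^ k)) := hσk0.eventually hl'ana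
  have ev4 : ∀ᶠ t : ℂ in nhds 0,
      fderiv ℂ ((l ∘ foldAt n k i) ∘ h) (σ t) = fderiv ℂ (l' ∘ foldAt n k i0) (σ t) :=
    hσ0.eventually heq'.fderiv
  have key : ∀ᶠ t : ℂ in nhds 0,
      Dl (τ t) * ((k : ℂ) * (h (σ t) i) ^ (k - 1)) * Dh (σ t)
        = Dl' (σ (t ^ k)) * ((k : ℂ) * t ^ (k - 1)) := by
    filter_upwards [ev1, ev2, ev3, ev4] with t h1 h2 h3 h4
    have Hh : HasFDerivAt h (fderiv ℂ h (σ t)) (σ t) := h1.differentiableAt.hasFDerivAt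
    have Hfold : HasFDerivAt (foldAt n k i) (foldDeriv n k i (h (σ t))) (h (σ t)) :=
      hasFDerivAt_foldAt n k i (h (σ t))
    have Hl : HasFDerivAt l (fderiv ℂ l (τ t)) (τ t) := h2.differentiableAt.hasFDerivAt
    have comp1 : HasFDerivAt (l ∘ foldAt n k i)
        ((fderiv ℂ l (τ t)).comp (foldDeriv n k i (h (σ t)))) (h (σ t)) :=
      Hl.comp (h (σ t)) Hfold
    have comp2 : HasFDerivAt ((l ∘ foldAt n k i) ∘ h)
        (((fderiv ℂ l (τ t)).comp (foldDeriv n k i (h (σ t)))).comp (fderiv ℂ h (σ t))) (σ t) :=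
      comp1.comp (σ t) Hh
    have Hfold0 : HasFDerivAt (foldAt n k i0) (foldDeriv n k i0 (σ t)) (σ t) :=
      hasFDerivAt_foldAt n k i0 (σ t)
    have Hl' : HasFDerivAt l' (fderiv ℂ l' (σ (t ^ k))) (foldAt n k i0 (σ t)) := by
      rw [hfoldσ t]; exact h3.differentiableAt.hasFDerivAt
    have comp3 : HasFDerivAt (l' ∘ foldAt n k i0)
        ((fderiv ℂ l' (σ (t ^ k))).comp (foldDeriv n k i0 (σ t))) (σ t) :=
      Hl'.comp (σ t) Hfold0
    have lhs_eq := comp2.fderiv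
    have rhs_eq := comp3.fderiv
    have := congrArg (fun L : Cn n →L[ℂ] Cn n => LinearMap.det (L : Cn n →ₗ[ℂ] Cn n)) h4
    rw [lhs_eq, rhs_eq] at this
    simp only [ContinuousLinearMap.toLinearMap_comp, LinearMap.det_comp, det_foldDeriv] at this
    have hσti0 : σ t i0 = t := by simp [hσ]
    rw [hσti0] at this
    exact this
  -- limits along the punctured neighborhood
  have hDlcont : ContinuousAt Dl 0 := contAt_detFderiv hlana
  have hDhcont : ContinuousAt Dh 0 := contAt_detFderiv hhana
  have hDl'cont : ContinuousAt Dl' 0 := contAt_detFderiv hl'ana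
  -- slope of the curve t ↦ h (σ t) i
  set curve : ℂ → ℂ := fun t => h (σ t) i with hcurve
  have hcurve0 : curve 0 = 0 := by simp [hcurve, hσzero, hh0]
  set σL : ℂ →L[ℂ] Cn n := ContinuousLinearMap.pi
      (fun j => if j = i0 then ContinuousLinearMap.id ℂ ℂ else 0) with hσL
  have hσLcoe : σ = ⇑σL := by
    funext t j
    by_cases hj : j = i0 <;> simp [hσ, hσL, ContinuousLinearMap.pi_apply, hj]
  have Hσ : HasFDerivAt σ σL 0 := by rw [hσLcoe]; exact σL.hasFDerivAt
  have Hh0' : HasFDerivAt h (fderiv ℂ h 0) (σ 0) := by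
    rw [hσzero]; exact (hhana.self_of_nhds).differentiableAt.hasFDerivAt
  have Hhσ : HasFDerivAt (h ∘ σ) ((fderiv ℂ h 0).comp σL) 0 := Hh0'.comp 0 Hσ
  have Hcur : HasFDerivAt curve
      ((ContinuousLinearMap.proj i : Cn n →L[ℂ] ℂ).comp ((fderiv ℂ h 0).comp σL)) 0 := by
    have := (hasFDerivAt_apply (𝕜 := ℂ) i ((h ∘ σ) 0)).comp 0 Hhσ
    exact this
  set c : ℂ := ((ContinuousLinearMap.proj i : Cn n →L[ℂ] ℂ).comp ((fderiv ℂ h 0).comp σL)) 1 with hc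
  have HcurD : HasDerivAt curve c 0 := Hcur.hasDerivAt
  have hslope : Tendsto (fun t => curve t / t) (nhdsWithin 0 {(0:ℂ)}ᶜ) (nhds c) := by
    have h1 := hasDerivAt_iff_tendsto_slope.1 HcurD
    have h2 : slope curve 0 = fun t => curve t / t := by
      funext t
      rw [slope_def_field]
      simp [hcurve0]
    rwa [h2] at h1
  -- LHS limit is 0
  have T1 : Tendsto (fun t : ℂ => Dl (τ t)) (nhdsWithin 0 {(0:ℂ)}ᶜ) (nhds 0) := by
    have := hDlcont.tendsto.comp (hτ0.mono_left (nhdsWithin_le_nhds : nhdsWithin (0:ℂ) {(0:ℂ)}ᶜ ≤ nhds 0))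
    rw [hd] at this
    simpa [Function.comp_def] using this
  have T2 : Tendsto (fun t : ℂ => (k : ℂ) * (curve t / t) ^ (k - 1))
      (nhdsWithin 0 {(0:ℂ)}ᶜ) (nhds ((k : ℂ) * c ^ (k - 1))) :=
    tendsto_const_nhds.mul (hslope.pow (k - 1))
  have T3 : Tendsto (fun t : ℂ => Dh (σ t)) (nhdsWithin 0 {(0:ℂ)}ᶜ) (nhds (Dh 0)) := by
    have := hDhcont.tendsto.comp (hσ0.mono_left (nhdsWithin_le_nhds : nhdsWithin (0:ℂ) {(0:ℂ)}ᶜ ≤ nhds 0))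
    simpa [Function.comp_def] using this
  have TL0 : Tendsto (fun t : ℂ => Dl (τ t) * ((k : ℂ) * (curve t / t) ^ (k - 1)) * Dh (σ t))
      (nhdsWithin 0 {(0:ℂ)}ᶜ) (nhds 0) := by
    simpa using (T1.mul T2).mul T3
  have TL : Tendsto (fun t : ℂ =>
      (Dl (τ t) * ((k : ℂ) * (curve t) ^ (k - 1)) * Dh (σ t)) / t ^ (k - 1))
      (nhdsWithin 0 {(0:ℂ)}ᶜ) (nhds 0) := by
    apply Filter.Tendsto.congr' _ TL0
    filter_upwards [self_mem_nhdsWithin] with t ht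
    have htne : t ≠ 0 := ht
    have hpow : t ^ (k - 1) ≠ 0 := pow_ne_zero _ htne
    rw [div_pow]
    field_simp
  have TR : Tendsto (fun t : ℂ => (Dl' (σ (t ^ k)) * ((k : ℂ) * t ^ (k - 1))) / t ^ (k - 1))
      (nhdsWithin 0 {(0:ℂ)}ᶜ) (nhds (Dl' 0 * k)) := by
    have T4 : Tendsto (fun t : ℂ => Dl' (σ (t ^ k)) * (k : ℂ))
        (nhdsWithin 0 {(0:ℂ)}ᶜ) (nhds (Dl' 0 * k)) := by
      have := hDl'cont.tendsto.comp (hσk0.mono_left (nhdsWithin_le_nhds : nhdsWithin (0:ℂ) {(0:ℂ)}ᶜ ≤ nhds 0))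
      exact (by simpa [Function.comp_def] using this : Tendsto (fun t : ℂ => Dl' (σ (t ^ k)))
        (nhdsWithin 0 {(0:ℂ)}ᶜ) (nhds (Dl' 0))).mul tendsto_const_nhds
    apply Filter.Tendsto.congr' _ T4
    filter_upwards [self_mem_nhdsWithin] with t ht
    have htne : t ≠ 0 := ht
    have hpow : t ^ (k - 1) ≠ 0 := pow_ne_zero _ htne
    field_simp
  have hEq : (fun t : ℂ =>
      (Dl (τ t) * ((k : ℂ) * (curve t) ^ (k - 1)) * Dh (σ t)) / t ^ (k - 1))
      =ᶠ[nhdsWithin 0 {(0:ℂ)}ᶜ]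
      (fun t : ℂ => (Dl' (σ (t ^ k)) * ((k : ℂ) * t ^ (k - 1))) / t ^ (k - 1)) := by
    apply Filter.EventuallyEq.filter_mono _ nhdsWithin_le_nhds
    exact key.mono fun t ht => by
      have := congrArg (fun z : ℂ => z / t ^ (k - 1)) ht
      simpa using this
  have huniq : (0 : ℂ) = Dl' 0 * k := tendsto_nhds_unique (Filter.Tendsto.congr' hEq TL) TR
  have hDl'ne : Dl' 0 ≠ 0 := det_ne_zero_of_isUnit hl'u
  exact (mul_ne_zero hDl'ne hkc) huniq.symm
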